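/- Complete invariants for the diagonal SO₃-action on tuples of quaternions over a real closed field: let k be a real closed field and v, w : Fin m → Quaternion k. Then the following are equivalent: (1) (v i).re = (w i).re for all i, and ((v i − star (v i)) * (v j − star (v j))).re = ((w i − star (w i)) * (w j − star (w j))).re for all i, j, and ((v i − star (v i)) * (v j − star (v j)) * (v l − star (v l))).re = ((w i − star (w i)) * (w j − star (w j)) * (w l − star (w l))).re for all i, j, l; (2) there exists a matrix R : Matrix (Fin 3) (Fin 3) k with Rᵀ * R = 1 and det R = 1 such that for all i, (w i).re = (v i).re and R.mulVec (imVec (v i)) = imVec (w i). -/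

import Mathlib

open Matrix

/-- The imaginary part of a quaternion over a field `k`. -/
def imVec {k : Type*} [Field k] [LinearOrder k] [IsStrictOrderedRing k] (q : Quaternion k) : Fin 3 → k :=
  ![q.imI, q.imJ, q.imK]

section Aux

variable {k : Type*} [Field k] [LinearOrder k] [IsStrictOrderedRing k]

private def dot3 (a b : Fin 3 → k) : k := a 0 * b 0 + a 1 * b 1 + a 2 * b 2

private def cross3 (a b : Fin 3 → k) : Fin 3 → k :=
  ![a 1 * b 2 - a 2 * b 1, a 2 * b 0 - a 0 * b 2, a 0 * b 1 - a 1 * b 0]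

private def trip (a b c : Fin 3 → k) : k := dot3 (cross3 a b) c

private lemma qre2 (p q : Quaternion k) :
    ((p - star p) * (q - star q)).re = -4 * dot3 (imVec p) (imVec q) := by
  simp [dot3, imVec, Quaternion.re_mul]
  ring

private lemma qre3 (p q r : Quaternion k) :
    ((p - star p) * (q - star q) * (r - star r)).re
      = -8 * trip (imVec p) (imVec q) (imVec r) := by
  simp [trip, dot3, cross3, imVec, Quaternion.re_mul]
  ring

private lemma fin3_cases {P : Fin 3 → Prop} (h0 : P 0) (h1 : P 1) (h2 : P 2) : ∀ a, P a := by
  intro a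
  fin_cases a
  · exact h0
  · exact h1
  · exact h2

private lemma dot3_self_nonneg (a : Fin 3 → k) : 0 ≤ dot3 a a := by
  have : dot3 a a = a 0 ^ 2 + a 1 ^ 2 + a 2 ^ 2 := by simp [dot3]; ring
  rw [this]; positivity

private lemma dot3_self_eq_zero {a : Fin 3 → k} (h : dot3 a a = 0) : a = 0 := by
  simp only [dot3] at h
  funext j
  fin_cases j <;> simp <;>
    nlinarith [sq_nonneg (a 0), sq_nonneg (a 1), sq_nonneg (a 2)]

private lemma sqrt_exists (hsq : ∀ x : k, 0 ≤ x → ∃ y : k, y ^ 2 = x) {x : k} (hx : 0 < x) :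
    ∃ a : k, 0 < a ∧ a ^ 2 = x := by
  obtain ⟨y, hy⟩ := hsq x hx.le
  have hy0 : y ≠ 0 := by rintro rfl; simp at hy; exact hx.ne' hy.symm
  exact ⟨|y|, abs_pos.mpr hy0, by rwa [sq_abs]⟩

private lemma mulVec_dot (R : Matrix (Fin 3) (Fin 3) k) (hR : Rᵀ * R = 1) (a b : Fin 3 → k) :
    dot3 (R.mulVec a) (R.mulVec b) = dot3 a b := by
  have h1 : dot3 (R.mulVec a) (R.mulVec b) = dot3 a ((Rᵀ * R).mulVec b) := by
    simp [dot3, Matrix.mulVec, Matrix.mul_apply, dotProduct, Fin.sum_univ_three,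
      Matrix.transpose_apply]
    ring
  rw [h1, hR, Matrix.one_mulVec]

private lemma mulVec_trip (R : Matrix (Fin 3) (Fin 3) k) (a b c : Fin 3 → k) :
    trip (R.mulVec a) (R.mulVec b) (R.mulVec c) = R.det * trip a b c := by
  simp [trip, dot3, cross3, Matrix.mulVec, dotProduct, Fin.sum_univ_three,
    Matrix.det_fin_three]
  ring

private lemma cross_frame (e0 e1 : Fin 3 → k) (h00 : dot3 e0 e0 = 1) (h11 : dot3 e1 e1 = 1)
    (h01 : dot3 e0 e1 = 0) :
    ∀ a b : Fin 3, dot3 (![e0, e1, cross3 e0 e1] a) (![e0, e1, cross3 e0 e1] b)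
      = if a = b then 1 else 0 := by
  simp only [dot3] at h00 h11 h01
  refine fin3_cases ?_ ?_ ?_ <;> refine fin3_cases ?_ ?_ ?_ <;>
    norm_num [Fin.ext_iff, dot3, cross3, Matrix.cons_val_two, Matrix.tail_cons, Matrix.head_cons] <;>
    first
      | linear_combination h00
      | linear_combination h11
      | linear_combination h01
      | ring1
      | linear_combination (e1 0 ^ 2 + e1 1 ^ 2 + e1 2 ^ 2) * h00 + h11
          - (e0 0 * e1 0 + e0 1 * e1 1 + e0 2 * e1 2) * h01

private lemma perp_exists (hsq : ∀ x : k, 0 ≤ x → ∃ y : k, y ^ 2 = x) {a : Fin 3 → k}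
    (ha : dot3 a a = 1) :
    ∃ b : Fin 3 → k, dot3 b b = 1 ∧ dot3 a b = 0 := by
  by_cases h : a 0 ^ 2 + a 1 ^ 2 = 0
  · have h0 : a 0 = 0 := by nlinarith [sq_nonneg (a 0), sq_nonneg (a 1)]
    exact ⟨![1, 0, 0], by norm_num [dot3, Matrix.cons_val_two, Matrix.tail_cons, Matrix.head_cons], by norm_num [dot3, h0, Matrix.cons_val_two, Matrix.tail_cons, Matrix.head_cons]⟩
  · have hpos : 0 < a 0 ^ 2 + a 1 ^ 2 := lt_of_le_of_ne (by positivity) (Ne.symm h)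
    obtain ⟨β, hβ, hβ2⟩ := sqrt_exists hsq hpos
    have hβ' : β ≠ 0 := hβ.ne'
    have hβi : β⁻¹ * β = 1 := inv_mul_cancel₀ hβ'
    refine ⟨![β⁻¹ * -(a 1), β⁻¹ * a 0, 0], ?_, ?_⟩
    · simp only [dot3]
      norm_num [Matrix.cons_val_two, Matrix.tail_cons, Matrix.head_cons]
      linear_combination (β⁻¹ * β + 1) * hβi - β⁻¹ ^ 2 * hβ2
    · simp only [dot3]
      norm_num [Matrix.cons_val_two, Matrix.tail_cons, Matrix.head_cons]
      ring

private lemma parallel_comp (p q : Fin 3 → k)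
    (h : dot3 q q * dot3 p p = dot3 q p ^ 2) :
    ∀ j, dot3 p p * q j = dot3 q p * p j := by
  have h0 : (fun j => dot3 p p * q j - dot3 q p * p j) = (0 : Fin 3 → k) := by
    apply dot3_self_eq_zero
    simp only [dot3] at h ⊢
    linear_combination (p 0 * p 0 + p 1 * p 1 + p 2 * p 2) * h
  intro j
  have := congrFun h0 j
  simpa [sub_eq_zero] using this

private lemma dot3_zero_of_parallel {c d : k} (hc : c ≠ 0) {p q r : Fin 3 → k}
    (hj : ∀ j, c * q j = d * p j) (hp : dot3 r p = 0) : dot3 r q = 0 := by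
  have h1 : c * dot3 r q = d * dot3 r p := by
    simp only [dot3]
    linear_combination r 0 * hj 0 + r 1 * hj 1 + r 2 * hj 2
  rw [hp, mul_zero] at h1
  exact (mul_eq_zero.mp h1).resolve_left hc

private lemma build_frame {m : ℕ} (u x : Fin m → Fin 3 → k) (e0 e1 f0 f1 : Fin 3 → k)
    (h00 : dot3 e0 e0 = 1) (h11 : dot3 e1 e1 = 1) (h01 : dot3 e0 e1 = 0)
    (g00 : dot3 f0 f0 = 1) (g11 : dot3 f1 f1 = 1) (g01 : dot3 f0 f1 = 0)
    (m0 : ∀ i, dot3 e0 (u i) = dot3 f0 (x i))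
    (m1 : ∀ i, dot3 e1 (u i) = dot3 f1 (x i))
    (m2 : ∀ i, dot3 (cross3 e0 e1) (u i) = dot3 (cross3 f0 f1) (x i)) :
    ∃ e f : Fin 3 → Fin 3 → k,
      (∀ a b, dot3 (e a) (e b) = if a = b then 1 else 0) ∧
      (∀ a b, dot3 (f a) (f b) = if a = b then 1 else 0) ∧
      e 2 = cross3 (e 0) (e 1) ∧ f 2 = cross3 (f 0) (f 1) ∧
      (∀ i a, dot3 (e a) (u i) = dot3 (f a) (x i)) := by
  refine ⟨![e0, e1, cross3 e0 e1], ![f0, f1, cross3 f0 f1],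
    cross_frame e0 e1 h00 h11 h01, cross_frame f0 f1 g00 g11 g01, by simp, by simp, ?_⟩
  intro i
  refine fin3_cases ?_ ?_ ?_ <;>
    simp only [Matrix.cons_val_zero, Matrix.cons_val_one, Matrix.head_cons,
      Matrix.cons_val_two, Matrix.tail_cons]
  exacts [m0 i, m1 i, m2 i]

private lemma frame_exists (hsq : ∀ x : k, 0 ≤ x → ∃ y : k, y ^ 2 = x) {m : ℕ}
    (u x : Fin m → Fin 3 → k)
    (hg : ∀ i j, dot3 (u i) (u j) = dot3 (x i) (x j))
    (htr : ∀ i j l, trip (u i) (u j) (u l) = trip (x i) (x j) (x l)) :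
    ∃ e f : Fin 3 → Fin 3 → k,
      (∀ a b, dot3 (e a) (e b) = if a = b then 1 else 0) ∧
      (∀ a b, dot3 (f a) (f b) = if a = b then 1 else 0) ∧
      e 2 = cross3 (e 0) (e 1) ∧ f 2 = cross3 (f 0) (f 1) ∧
      (∀ i a, dot3 (e a) (u i) = dot3 (f a) (x i)) := by
  by_cases h0 : ∀ i, u i = 0
  · have hx0 : ∀ i, x i = 0 := by
      intro i
      apply dot3_self_eq_zero
      rw [← hg i i, h0 i]
      simp [dot3]
    refine build_frame u x ![1,0,0] ![0,1,0] ![1,0,0] ![0,1,0] (by norm_num [dot3, Matrix.cons_val_two, Matrix.tail_cons, Matrix.head_cons])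
      (by norm_num [dot3, Matrix.cons_val_two, Matrix.tail_cons, Matrix.head_cons]) (by norm_num [dot3, Matrix.cons_val_two, Matrix.tail_cons, Matrix.head_cons]) (by norm_num [dot3, Matrix.cons_val_two, Matrix.tail_cons, Matrix.head_cons]) (by norm_num [dot3, Matrix.cons_val_two, Matrix.tail_cons, Matrix.head_cons])
      (by norm_num [dot3, Matrix.cons_val_two, Matrix.tail_cons, Matrix.head_cons]) ?_ ?_ ?_ <;>
      intro i <;> rw [h0 i, hx0 i]
  · push_neg at h0
    obtain ⟨i0, hi0⟩ := h0
    have hU : 0 < dot3 (u i0) (u i0) :=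
      lt_of_le_of_ne (dot3_self_nonneg _) (fun hc => hi0 (dot3_self_eq_zero hc.symm))
    have hUne : dot3 (u i0) (u i0) ≠ 0 := hU.ne'
    obtain ⟨α, hα, hα2⟩ := sqrt_exists hsq hU
    have hαne : α ≠ 0 := hα.ne'
    have hti : α⁻¹ * α = 1 := inv_mul_cancel₀ hαne
    have hα2' := hα2
    have hg00 := hg i0 i0
    simp only [dot3] at hα2' hg00
    have h00 : dot3 (fun j => α⁻¹ * u i0 j) (fun j => α⁻¹ * u i0 j) = 1 := by
      simp only [dot3]
      linear_combination (α⁻¹ * α + 1) * hti - α⁻¹ ^ 2 * hα2'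
    have g00 : dot3 (fun j => α⁻¹ * x i0 j) (fun j => α⁻¹ * x i0 j) = 1 := by
      simp only [dot3]
      linear_combination (α⁻¹ * α + 1) * hti - α⁻¹ ^ 2 * hα2' - α⁻¹ ^ 2 * hg00
    have m0 : ∀ i, dot3 (fun j => α⁻¹ * u i0 j) (u i) = dot3 (fun j => α⁻¹ * x i0 j) (x i) := by
      intro i
      have hgi := hg i0 i
      simp only [dot3] at hgi ⊢
      linear_combination α⁻¹ * hgi
    by_cases hpar : ∀ i, dot3 (u i) (u i) * dot3 (u i0) (u i0) = dot3 (u i) (u i0) ^ 2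
    · -- all vectors parallel to u i0
      obtain ⟨e1, he11, he01⟩ := perp_exists hsq h00
      obtain ⟨f1, hf11, hf01⟩ := perp_exists hsq g00
      have hucomp : ∀ i j, dot3 (u i0) (u i0) * u i j = dot3 (u i) (u i0) * u i0 j :=
        fun i => parallel_comp (u i0) (u i) (hpar i)
      have hxcomp : ∀ i j, dot3 (u i0) (u i0) * x i j = dot3 (u i) (u i0) * x i0 j := by
        intro i j
        have hp : dot3 (x i) (x i) * dot3 (x i0) (x i0) = dot3 (x i) (x i0) ^ 2 := by
          rw [← hg i i, ← hg i0 i0, ← hg i i0]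
          exact hpar i
        have h' := parallel_comp (x i0) (x i) hp j
        rwa [← hg i0 i0, ← hg i i0] at h'
      have he1u0 : dot3 e1 (u i0) = 0 := by
        have h1 : α⁻¹ * dot3 e1 (u i0) = 0 := by
          simp only [dot3] at he01 ⊢
          linear_combination he01
        exact (mul_eq_zero.mp h1).resolve_left (inv_ne_zero hαne)
      have hf1x0 : dot3 f1 (x i0) = 0 := by
        have h1 : α⁻¹ * dot3 f1 (x i0) = 0 := by
          simp only [dot3] at hf01 ⊢
          linear_combination hf01
        exact (mul_eq_zero.mp h1).resolve_left (inv_ne_zero hαne)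
      have hcu0 : dot3 (cross3 (fun j => α⁻¹ * u i0 j) e1) (u i0) = 0 := by
        simp only [dot3, cross3, Matrix.cons_val_zero, Matrix.cons_val_one, Matrix.head_cons,
          Matrix.cons_val_two, Matrix.tail_cons]
        ring
      have hcx0 : dot3 (cross3 (fun j => α⁻¹ * x i0 j) f1) (x i0) = 0 := by
        simp only [dot3, cross3, Matrix.cons_val_zero, Matrix.cons_val_one, Matrix.head_cons,
          Matrix.cons_val_two, Matrix.tail_cons]
        ring
      refine build_frame u x _ e1 _ f1 h00 he11 he01 g00 hf11 hf01 m0 ?_ ?_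
      · intro i
        rw [dot3_zero_of_parallel hUne (hucomp i) he1u0,
          dot3_zero_of_parallel hUne (hxcomp i) hf1x0]
      · intro i
        rw [dot3_zero_of_parallel hUne (hucomp i) hcu0,
          dot3_zero_of_parallel hUne (hxcomp i) hcx0]
    · -- some vector not parallel
      push_neg at hpar
      obtain ⟨i1, hi1⟩ := hpar
      have hBnn : 0 ≤ dot3 (u i1) (u i1) * dot3 (u i0) (u i0) - dot3 (u i1) (u i0) ^ 2 := by
        have hid : dot3 (u i1) (u i1) * dot3 (u i0) (u i0) - dot3 (u i1) (u i0) ^ 2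
            = dot3 (cross3 (u i1) (u i0)) (cross3 (u i1) (u i0)) := by
          simp only [dot3, cross3, Matrix.cons_val_zero, Matrix.cons_val_one, Matrix.head_cons,
            Matrix.cons_val_two, Matrix.tail_cons]
          ring
        rw [hid]
        exact dot3_self_nonneg _
      have hB : 0 < dot3 (u i1) (u i1) * dot3 (u i0) (u i0) - dot3 (u i1) (u i0) ^ 2 :=
        lt_of_le_of_ne hBnn (Ne.symm (sub_ne_zero_of_ne hi1))
      have hN : 0 < dot3 (u i0) (u i0) *
          (dot3 (u i1) (u i1) * dot3 (u i0) (u i0) - dot3 (u i1) (u i0) ^ 2) := mul_pos hU hB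
      obtain ⟨γ, hγ, hγ2⟩ := sqrt_exists hsq hN
      have hγne : γ ≠ 0 := hγ.ne'
      have hsγ : γ⁻¹ * γ = 1 := inv_mul_cancel₀ hγne
      have hγ2' := hγ2
      have hg11 := hg i1 i1
      have hg10 := hg i1 i0
      simp only [dot3] at hγ2' hg11 hg10
      have h11 : dot3 (fun j => γ⁻¹ * (dot3 (u i0) (u i0) * u i1 j - dot3 (u i1) (u i0) * u i0 j))
          (fun j => γ⁻¹ * (dot3 (u i0) (u i0) * u i1 j - dot3 (u i1) (u i0) * u i0 j)) = 1 := by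
        simp only [dot3]
        linear_combination (γ⁻¹ * γ + 1) * hsγ - γ⁻¹ ^ 2 * hγ2'
      have g11 : dot3 (fun j => γ⁻¹ * (dot3 (u i0) (u i0) * x i1 j - dot3 (u i1) (u i0) * x i0 j))
          (fun j => γ⁻¹ * (dot3 (u i0) (u i0) * x i1 j - dot3 (u i1) (u i0) * x i0 j)) = 1 := by
        simp only [dot3]
        linear_combination (γ⁻¹ * γ + 1) * hsγ - γ⁻¹ ^ 2 * hγ2'
          - γ⁻¹ ^ 2 * (u i0 0 * u i0 0 + u i0 1 * u i0 1 + u i0 2 * u i0 2) ^ 2 * hg11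
          + 2 * γ⁻¹ ^ 2 * (u i0 0 * u i0 0 + u i0 1 * u i0 1 + u i0 2 * u i0 2)
              * (u i1 0 * u i0 0 + u i1 1 * u i0 1 + u i1 2 * u i0 2) * hg10
          - γ⁻¹ ^ 2 * (u i1 0 * u i0 0 + u i1 1 * u i0 1 + u i1 2 * u i0 2) ^ 2 * hg00
      have h01 : dot3 (fun j => α⁻¹ * u i0 j)
          (fun j => γ⁻¹ * (dot3 (u i0) (u i0) * u i1 j - dot3 (u i1) (u i0) * u i0 j)) = 0 := by
        simp only [dot3]
        ring
      have g01 : dot3 (fun j => α⁻¹ * x i0 j)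
          (fun j => γ⁻¹ * (dot3 (u i0) (u i0) * x i1 j - dot3 (u i1) (u i0) * x i0 j)) = 0 := by
        simp only [dot3]
        linear_combination
          - (α⁻¹ * γ⁻¹ * (u i0 0 * u i0 0 + u i0 1 * u i0 1 + u i0 2 * u i0 2)) * hg10
          + α⁻¹ * γ⁻¹ * (u i1 0 * u i0 0 + u i1 1 * u i0 1 + u i1 2 * u i0 2) * hg00
      refine build_frame u x _ _ _ _ h00 h11 h01 g00 g11 g01 m0 ?_ ?_
      · intro i
        have hg1i := hg i1 i
        have hg0i := hg i0 i
        simp only [dot3] at hg1i hg0i ⊢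
        linear_combination
          γ⁻¹ * (u i0 0 * u i0 0 + u i0 1 * u i0 1 + u i0 2 * u i0 2) * hg1i
          - γ⁻¹ * (u i1 0 * u i0 0 + u i1 1 * u i0 1 + u i1 2 * u i0 2) * hg0i
      · intro i
        have htt := htr i0 i1 i
        simp only [trip, dot3, cross3, Matrix.cons_val_zero, Matrix.cons_val_one,
          Matrix.head_cons, Matrix.cons_val_two, Matrix.tail_cons] at htt ⊢
        linear_combination
          α⁻¹ * γ⁻¹ * (u i0 0 * u i0 0 + u i0 1 * u i0 1 + u i0 2 * u i0 2) * htt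

end Aux

/-- Complete invariants for the diagonal `SO₃`-action on tuples of quaternions
over a real closed field `k` (a linearly ordered field in which every
nonnegative element is a square and every odd-degree polynomial has a root). -/
theorem quaternion_complete_invariants_rcf {k : Type*} [Field k] [LinearOrder k] [IsStrictOrderedRing k]
    (hsq : ∀ x : k, 0 ≤ x → ∃ y : k, y ^ 2 = x)
    (hodd : ∀ p : Polynomial k, Odd p.natDegree → ∃ x : k, p.eval x = 0)
    {m : ℕ} (v w : Fin m → Quaternion k) :
    ((∀ i, (v i).re = (w i).re) ∧
     (∀ i j, ((v i - star (v i)) * (v j - star (v j))).re =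
        ((w i - star (w i)) * (w j - star (w j))).re) ∧
     (∀ i j l, ((v i - star (v i)) * (v j - star (v j)) * (v l - star (v l))).re =
        ((w i - star (w i)) * (w j - star (w j)) * (w l - star (w l))).re))
    ↔
    ∃ R : Matrix (Fin 3) (Fin 3) k, Rᵀ * R = 1 ∧ R.det = 1 ∧
      ∀ i, (w i).re = (v i).re ∧ R.mulVec (imVec (v i)) = imVec (w i) := by
  constructor
  · rintro ⟨h1, h2, h3⟩
    have hg : ∀ i j, dot3 (imVec (v i)) (imVec (v j)) = dot3 (imVec (w i)) (imVec (w j)) := by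
      intro i j
      have h := h2 i j
      rw [qre2, qre2] at h
      linarith
    have htr : ∀ i j l, trip (imVec (v i)) (imVec (v j)) (imVec (v l))
        = trip (imVec (w i)) (imVec (w j)) (imVec (w l)) := by
      intro i j l
      have h := h3 i j l
      rw [qre3, qre3] at h
      linarith
    obtain ⟨e, f, he, hf, he2, hf2, hm⟩ := frame_exists hsq _ _ hg htr
    set E : Matrix (Fin 3) (Fin 3) k := Matrix.of fun r j => e j r with hEdef
    set F : Matrix (Fin 3) (Fin 3) k := Matrix.of fun r j => f j r with hFdef
    have hE : Eᵀ * E = 1 := by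
      ext a b
      have h := he a b
      simp only [dot3] at h
      simp only [Matrix.mul_apply, Matrix.transpose_apply, Matrix.one_apply, hEdef,
        Matrix.of_apply, Fin.sum_univ_three]
      exact h
    have hF : Fᵀ * F = 1 := by
      ext a b
      have h := hf a b
      simp only [dot3] at h
      simp only [Matrix.mul_apply, Matrix.transpose_apply, Matrix.one_apply, hFdef,
        Matrix.of_apply, Fin.sum_univ_three]
      exact h
    have hE' : E * Eᵀ = 1 := mul_eq_one_comm.mp hE
    have hF' : F * Fᵀ = 1 := mul_eq_one_comm.mp hF
    have detE : E.det = 1 := by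
      have h00 : dot3 (e 0) (e 0) = 1 := by rw [he 0 0, if_pos rfl]
      have h11 : dot3 (e 1) (e 1) = 1 := by rw [he 1 1, if_pos rfl]
      have h01 : dot3 (e 0) (e 1) = 0 := by rw [he 0 1, if_neg (by decide)]
      have hc : ∀ j, e 2 j = cross3 (e 0) (e 1) j := fun j => by rw [he2]
      simp only [dot3] at h00 h11 h01
      rw [Matrix.det_fin_three]
      simp only [hEdef, Matrix.of_apply, hc 0, hc 1, hc 2, cross3, Matrix.cons_val_zero,
        Matrix.cons_val_one, Matrix.head_cons, Matrix.cons_val_two, Matrix.tail_cons]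
      linear_combination (e 1 0 ^ 2 + e 1 1 ^ 2 + e 1 2 ^ 2) * h00 + h11
        - (e 0 0 * e 1 0 + e 0 1 * e 1 1 + e 0 2 * e 1 2) * h01
    have detF : F.det = 1 := by
      have h00 : dot3 (f 0) (f 0) = 1 := by rw [hf 0 0, if_pos rfl]
      have h11 : dot3 (f 1) (f 1) = 1 := by rw [hf 1 1, if_pos rfl]
      have h01 : dot3 (f 0) (f 1) = 0 := by rw [hf 0 1, if_neg (by decide)]
      have hc : ∀ j, f 2 j = cross3 (f 0) (f 1) j := fun j => by rw [hf2]
      simp only [dot3] at h00 h11 h01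
      rw [Matrix.det_fin_three]
      simp only [hFdef, Matrix.of_apply, hc 0, hc 1, hc 2, cross3, Matrix.cons_val_zero,
        Matrix.cons_val_one, Matrix.head_cons, Matrix.cons_val_two, Matrix.tail_cons]
      linear_combination (f 1 0 ^ 2 + f 1 1 ^ 2 + f 1 2 ^ 2) * h00 + h11
        - (f 0 0 * f 1 0 + f 0 1 * f 1 1 + f 0 2 * f 1 2) * h01
    refine ⟨F * Eᵀ, ?_, ?_, ?_⟩
    · rw [Matrix.transpose_mul, Matrix.transpose_transpose, Matrix.mul_assoc,
        ← Matrix.mul_assoc Fᵀ, hF, Matrix.one_mul, hE']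
    · rw [Matrix.det_mul, Matrix.det_transpose, detE, detF, one_mul]
    · intro i
      refine ⟨(h1 i).symm, ?_⟩
      have hEv : Eᵀ.mulVec (imVec (v i)) = Fᵀ.mulVec (imVec (w i)) := by
        funext a
        have h := hm i a
        simp only [dot3] at h
        simp only [Matrix.mulVec, dotProduct, Matrix.transpose_apply, hEdef, hFdef,
          Matrix.of_apply, Fin.sum_univ_three]
        exact h
      rw [← Matrix.mulVec_mulVec, hEv, Matrix.mulVec_mulVec, hF', Matrix.one_mulVec]
  · rintro ⟨R, hR, hdet, hRw⟩
    have him : ∀ i, imVec (w i) = R.mulVec (imVec (v i)) := fun i => ((hRw i).2).symm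
    refine ⟨fun i => ((hRw i).1).symm, ?_, ?_⟩
    · intro i j
      rw [qre2, qre2, him i, him j, mulVec_dot R hR]
    · intro i j l
      rw [qre3, qre3, him i, him j, him l, mulVec_trip, hdet, one_mul]
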